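/- Let J be a finite type, φ : J → ℕ → Prop, and suppose for each j ∈ J we are given a functional 𝔊_j : (ℕ → ℕ) → ℕ → ℕ such that for every F : ℕ → ℕ and every d ∈ ℕ there exists k with d ≤ k ≤ 𝔊_j(F, d) such that φ_j(i) holds for all i with k ≤ i ≤ F(k). Then there exists a functional 𝔊 : (ℕ → ℕ) → ℕ → ℕ such that for every F : ℕ → ℕ and every d ∈ ℕ there exists k with d ≤ k ≤ 𝔊(F, d) such that for every j ∈ J, φ_j(i) holds for all i with k ≤ i ≤ F(k). -/
import Mathlib


/-- The Knitting Lemma: if each predicate `φ j` admits, uniformly in `F` and `d`, an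
interval of stability `[k, F k]` starting at some `k ≥ d` with `k ≤ 𝔊 j F d`, then
there is a single functional `𝔊` producing an interval of stability that works
simultaneously for all `j` in the finite index type `J`. -/
theorem knitting_lemma (J : Type) [Fintype J] (φ : J → ℕ → Prop)
    (G : J → (ℕ → ℕ) → ℕ → ℕ)
    (h : ∀ (j : J) (F : ℕ → ℕ) (d : ℕ),
      ∃ k, d ≤ k ∧ k ≤ G j F d ∧ ∀ i, k ≤ i → i ≤ F k → φ j i) :
    ∃ Gall : (ℕ → ℕ) → ℕ → ℕ, ∀ (F : ℕ → ℕ) (d : ℕ),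
      ∃ k, d ≤ k ∧ k ≤ Gall F d ∧ ∀ (j : J) (i : ℕ), k ≤ i → i ≤ F k → φ j i := by
  classical
  suffices h' : ∀ s : Finset J, ∃ Gall : (ℕ → ℕ) → ℕ → ℕ, ∀ (F : ℕ → ℕ) (d : ℕ),
      ∃ k, d ≤ k ∧ k ≤ Gall F d ∧ ∀ j ∈ s, ∀ i, k ≤ i → i ≤ F k → φ j i by
    obtain ⟨Gall, hG⟩ := h' Finset.univ
    refine ⟨Gall, fun F d => ?_⟩
    obtain ⟨k, h1, h2, h3⟩ := hG F d
    exact ⟨k, h1, h2, fun j i => h3 j (Finset.mem_univ j) i⟩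
  intro s
  induction s using Finset.induction with
  | empty => exact ⟨fun _ d => d, fun F d => ⟨d, le_rfl, le_rfl, by simp⟩⟩
  | @insert j s hjs ih =>
    obtain ⟨Gs, hGs⟩ := ih
    choose w hw1 hw2 hw3 using hGs
    refine ⟨fun F d => (Finset.range (G j (fun d' => F (w F d')) d + 1)).sup (Gs F),
      fun F d => ?_⟩
    obtain ⟨k₁, hk1, hk2, hk3⟩ := h j (fun d' => F (w F d')) d
    refine ⟨w F k₁, le_trans hk1 (hw1 F k₁), ?_, ?_⟩
    · exact le_trans (hw2 F k₁)
        (Finset.le_sup (Finset.mem_range.mpr (Nat.lt_succ_of_le hk2)))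
    · intro j' hj' i hi1 hi2
      rcases Finset.mem_insert.mp hj' with rfl | hj's
      · exact hk3 i (le_trans (hw1 F k₁) hi1) hi2
      · exact hw3 F k₁ j' hj's i hi1 hi2
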